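/- Let A, B ⊆ ℕ. If the symmetric difference A △ B is not piecewise syndetic, then: A is a set of pointwise recurrence if and only if B is; A is dynamically thick if and only if B is; A is dynamically syndetic if and only if B is; and A is dynamically central syndetic if and only if B is. -/

import Mathlib

/-- The set `A - n`, difference taken inside the positive integers:
`A - n = {m : m >= 1 and m + n ∈ A}`. -/
def NSub (A : Set ℕ) (n : ℕ) : Set ℕ := {m : ℕ | 0 < m ∧ m + n ∈ A}

/-- `S ⊆ ℕ` is thick if every finite subset of `ℕ` has a translate inside `S`. -/
def Thick (S : Set ℕ) : Prop :=
  ∀ F : Finset ℕ, ∃ n : ℕ, 0 < n ∧ ∀ f ∈ F, f + n ∈ S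

/-- `S ⊆ ℕ` is piecewise syndetic if `⋃_{i=1}^{N} (S - i)` is thick for some `N ≥ 1`. -/
def PiecewiseSyndetic (S : Set ℕ) : Prop :=
  ∃ N : ℕ, 0 < N ∧ Thick (⋃ i ∈ Finset.Icc 1 N, NSub S i)

/-- A topological dynamical system: a nonempty compact metric space together with a
continuous self-map. -/
structure MetricDynSystem where
  carrier : Type
  [metric : MetricSpace carrier]
  [cpt : CompactSpace carrier]
  [carrier_nonempty : Nonempty carrier]
  map : carrier → carrier
  continuous_map : Continuous map

attribute [instance] MetricDynSystem.metric MetricDynSystem.cpt MetricDynSystem.carrier_nonempty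

/-- A system is minimal if every point has dense forward orbit `{T^n x : n ∈ ℕ}`. -/
def MetricDynSystem.Minimal (S : MetricDynSystem) : Prop :=
  ∀ x : S.carrier, Dense {y : S.carrier | ∃ n : ℕ, 0 < n ∧ S.map^[n] x = y}

/-- `R(x, U)`: the set of (positive) times at which `x` visits `U`. -/
def RetTimes (S : MetricDynSystem) (x : S.carrier) (U : Set S.carrier) : Set ℕ :=
  {n : ℕ | 0 < n ∧ S.map^[n] x ∈ U}

/-- `A` is a set of pointwise recurrence: for every minimal system, every point `x` and
every open neighborhood `U` of `x`, some `n ∈ A` has `T^n x ∈ U`. -/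
def PointwiseRecurrent (A : Set ℕ) : Prop :=
  ∀ S : MetricDynSystem, S.Minimal →
    ∀ (x : S.carrier) (U : Set S.carrier), IsOpen U → x ∈ U →
      ∃ n ∈ A, 0 < n ∧ S.map^[n] x ∈ U

/-- `A` is dynamically thick: for every minimal system, every point `x` and every
nonempty open `U`, some `n ∈ A` has `T^n x ∈ U`. -/
def DynThick (A : Set ℕ) : Prop :=
  ∀ S : MetricDynSystem, S.Minimal →
    ∀ (x : S.carrier) (U : Set S.carrier), IsOpen U → U.Nonempty →
      ∃ n ∈ A, 0 < n ∧ S.map^[n] x ∈ U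

/-- `A` is dynamically syndetic: it contains a set of return times `R(x, U)` for a
minimal system and a nonempty open `U`. -/
def DynSyndetic (A : Set ℕ) : Prop :=
  ∃ S : MetricDynSystem, S.Minimal ∧
    ∃ (x : S.carrier) (U : Set S.carrier), IsOpen U ∧ U.Nonempty ∧ RetTimes S x U ⊆ A

/-- `A` is dynamically central syndetic: it contains a set of return times `R(x, U)` for
a minimal system and an open `U` containing `x`. -/
def DynCentralSyndetic (A : Set ℕ) : Prop :=
  ∃ S : MetricDynSystem, S.Minimal ∧
    ∃ (x : S.carrier) (U : Set S.carrier), IsOpen U ∧ x ∈ U ∧ RetTimes S x U ⊆ A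

noncomputable instance : MetricSpace (ℕ → Bool) := PiNat.metricSpace

namespace DynStab

/-- The one-sided shift. -/
def shift (z : ℕ → Bool) : ℕ → Bool := fun n => z (n + 1)

lemma shift_iterate (z : ℕ → Bool) (k n : ℕ) : (shift^[k] z) n = z (n + k) := by
  induction k generalizing z n with
  | zero => rfl
  | succ m ih =>
    rw [Function.iterate_succ_apply, ih (shift z) n]
    show z (n + m + 1) = z (n + (m+1)); ring_nf

/-- Syndetic subsets of ℕ (with bounded gaps). -/
def Synd (S : Set ℕ) : Prop := ∃ N : ℕ, ∀ a : ℕ, ∃ t : ℕ, a < t ∧ t ≤ a + N ∧ t ∈ S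

lemma Synd.mono {S T : Set ℕ} (h : S ⊆ T) (hS : Synd S) : Synd T := by
  obtain ⟨N, hN⟩ := hS
  exact ⟨N, fun a => by obtain ⟨t, h1, h2, h3⟩ := hN a; exact ⟨t, h1, h2, h h3⟩⟩

/-- Occurrence set of the length-`L` prefix of `y` inside `y`. -/
def OccSet (y : ℕ → Bool) (L : ℕ) : Set ℕ := {t | ∀ i < L, y (t + i) = y i}

/-- Uniformly recurrent 0-1 sequence. -/
def UnifRec (y : ℕ → Bool) : Prop := ∀ L, Synd (OccSet y L)

/-- The (closed, shift-invariant) language-subshift generated by `y` : all sequences each of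
whose prefixes occurs somewhere in `y`. This equals the orbit closure of `y`. -/
def lang (y : ℕ → Bool) : Set (ℕ → Bool) := {z | ∀ L, ∃ k, ∀ i < L, z i = y (k + i)}

lemma self_mem_lang (y : ℕ → Bool) : y ∈ lang y := fun L => ⟨0, fun i _ => by rw [Nat.zero_add]⟩

lemma shift_mem_lang {y z : ℕ → Bool} (hz : z ∈ lang y) : shift z ∈ lang y := by
  intro L
  obtain ⟨k, hk⟩ := hz (L + 1)
  exact ⟨k + 1, fun i hi => by
    show z (i + 1) = y (k + 1 + i)
    rw [hk (i+1) (by omega)]; congr 1; omega⟩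

lemma shift_iterate_mem_lang {y z : ℕ → Bool} (hz : z ∈ lang y) (n : ℕ) :
    shift^[n] z ∈ lang y := by
  induction n with
  | zero => exact hz
  | succ m ih => rw [Function.iterate_succ_apply']; exact shift_mem_lang ih

lemma isClosed_lang (y : ℕ → Bool) : IsClosed (lang y) := by
  rw [← isOpen_compl_iff, Metric.isOpen_iff]
  intro z hz
  simp only [Set.mem_compl_iff, lang, Set.mem_setOf_eq, not_forall] at hz
  obtain ⟨L, hL⟩ := hz
  refine ⟨(1/2) ^ L, by positivity, fun w hw => ?_⟩
  simp only [Set.mem_compl_iff, lang, Set.mem_setOf_eq, not_forall]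
  refine ⟨L, ?_⟩
  rintro ⟨k, hk⟩
  apply hL
  refine ⟨k, fun i hi => ?_⟩
  rw [Metric.mem_ball] at hw
  have hwz : w i = z i := PiNat.apply_eq_of_dist_lt (n := L) hw (le_of_lt hi)
  rw [← hwz, hk i hi]

lemma continuous_shift : Continuous shift :=
  continuous_pi (fun n => continuous_apply (n + 1))

/-- The subshift system generated by a sequence `y`. -/
noncomputable def subSys (y : ℕ → Bool) : MetricDynSystem where
  carrier := ↥(lang y)
  cpt := isCompact_iff_compactSpace.mp ((isClosed_lang y).isCompact)
  carrier_nonempty := ⟨⟨y, self_mem_lang y⟩⟩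
  map := fun z => ⟨shift z.1, shift_mem_lang z.2⟩
  continuous_map := Continuous.subtype_mk (continuous_shift.comp continuous_subtype_val) _

lemma subSys_map_iterate (y : ℕ → Bool) (n : ℕ) (z : (subSys y).carrier) :
    (((subSys y).map)^[n] z).1 = shift^[n] z.1 := by
  induction n generalizing z with
  | zero => rfl
  | succ m ih =>
    rw [Function.iterate_succ_apply, Function.iterate_succ_apply, ih]
    rfl

lemma subSys_minimal {y : ℕ → Bool} (hy : UnifRec y) : (subSys y).Minimal := by
  intro z
  rw [Metric.dense_iff]
  intro w r hr
  obtain ⟨L, hL⟩ : ∃ L : ℕ, (1/2 : ℝ) ^ L < r := exists_pow_lt_of_lt_one hr (by norm_num)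
  obtain ⟨k, hk⟩ := w.2 L
  obtain ⟨N, hN⟩ := hy (k + L)
  obtain ⟨a, ha⟩ := z.2 (N + k + L + 1)
  obtain ⟨t, ht1, ht2, ht3⟩ := hN a
  refine ⟨(subSys y).map^[(t - a) + k] z, ?_, ⟨(t - a) + k, by omega, rfl⟩⟩
  rw [Metric.mem_ball]
  change dist (((subSys y).map^[(t - a) + k] z).1) w.1 < r
  rw [subSys_map_iterate]
  calc dist (shift^[(t-a)+k] z.1) w.1 ≤ (1/2)^L := by
        rw [← PiNat.mem_cylinder_iff_dist_le]
        intro i hi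
        rw [shift_iterate]
        have h1 : z.1 (i + (t - a + k)) = y (a + (i + (t - a + k))) := ha _ (by omega)
        rw [h1, hk i hi]
        have h2 : a + (i + (t - a + k)) = t + (k + i) := by omega
        rw [h2]
        exact ht3 (k + i) (by omega)
    _ < r := hL


/-- Return times of any point to a nonempty open set in a minimal system are syndetic. -/
lemma synd_retTimes {S : MetricDynSystem} (hM : S.Minimal) {V : Set S.carrier}
    (hV : IsOpen V) (hne : V.Nonempty) (x : S.carrier) :
    Synd {n | 0 < n ∧ S.map^[n] x ∈ V} := by
  have hcov : (Set.univ : Set S.carrier) ⊆ ⋃ n : ℕ, (S.map^[n+1]) ⁻¹' V := by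
    intro w _
    obtain ⟨p, hp, hpV⟩ := (hM w).exists_mem_open hV hne
    obtain ⟨n, hn, rfl⟩ := hp
    simp only [Set.mem_iUnion, Set.mem_preimage]
    exact ⟨n - 1, by rw [show n - 1 + 1 = n by omega]; exact hpV⟩
  obtain ⟨t, ht⟩ := IsCompact.elim_finite_subcover isCompact_univ
    (fun n : ℕ => (S.map^[n+1]) ⁻¹' V)
    (fun n => hV.preimage (S.continuous_map.iterate (n+1))) hcov
  refine ⟨t.sup id + 1, fun a => ?_⟩
  have : S.map^[a] x ∈ ⋃ n ∈ t, (S.map^[n+1]) ⁻¹' V := ht (Set.mem_univ _)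
  simp only [Set.mem_iUnion, Set.mem_preimage] at this
  obtain ⟨n, hnt, hnV⟩ := this
  refine ⟨a + n + 1, by omega, ?_, by omega, ?_⟩
  · have := Finset.le_sup (f := id) hnt
    simp only [id] at this
    omega
  · rw [show a + n + 1 = (n+1) + a by omega, Function.iterate_add_apply]
    exact hnV

lemma exists_good_radius (f : ℕ → ℝ) {ε : ℝ} (hε : 0 < ε) :
    ∃ r : ℝ, 0 < r ∧ r < ε ∧ ∀ n, f n ≠ r := by
  by_contra hcon
  push_neg at hcon
  have hsub : Set.Ioo (0:ℝ) ε ⊆ Set.range f := by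
    rintro r ⟨h1, h2⟩
    obtain ⟨n, hn⟩ := hcon r h1 h2
    exact ⟨n, hn⟩
  have hc : (Set.Ioo (0:ℝ) ε).Countable := (Set.countable_range f).mono hsub
  have hmk : (Cardinal.mk (Set.Ioo (0:ℝ) ε)) ≤ Cardinal.aleph0 :=
    Cardinal.mk_le_aleph0_iff.mpr (Set.countable_coe_iff.mpr hc)
  rw [Cardinal.mk_Ioo_real hε] at hmk
  exact lt_irrefl _ (lt_of_lt_of_le Cardinal.aleph0_lt_continuum hmk)

/-- The itinerary of `x` relative to the ball of a "good" radius `r` about `u`. -/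
noncomputable def itin (S : MetricDynSystem) (x u : S.carrier) (r : ℝ) : ℕ → Bool :=
  fun n => decide (dist (S.map^[n] x) u < r)

lemma itin_unifRec {S : MetricDynSystem} (hM : S.Minimal) (x u : S.carrier) {r : ℝ}
    (hr : ∀ n, dist (S.map^[n] x) u ≠ r) : UnifRec (itin S x u r) := by
  intro L
  rcases Nat.eq_zero_or_pos L with hL | hL
  · subst hL
    exact ⟨1, fun a => ⟨a+1, by omega, by omega, fun i hi => by omega⟩⟩
  · set δ : ℝ := (Finset.range L).inf' (Finset.nonempty_range_iff.mpr (by omega)) (fun i => |dist (S.map^[i] x) u - r|)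
      with hδdef
    have hδpos : 0 < δ := by
      rw [hδdef, Finset.lt_inf'_iff]
      intro i _
      have := hr i
      have : dist (S.map^[i] x) u - r ≠ 0 := fun hc => this (by linarith)
      exact abs_pos.mpr this
    have hδle : ∀ i < L, δ ≤ |dist (S.map^[i] x) u - r| := by
      intro i hi
      rw [hδdef]
      exact Finset.inf'_le _ (Finset.mem_range.mpr hi)
    set V : Set S.carrier := ⋂ i ∈ Finset.range L, (S.map^[i]) ⁻¹' (Metric.ball (S.map^[i] x) δ)
      with hVdef
    have hVopen : IsOpen V :=
      isOpen_biInter_finset (fun i _ =>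
        (Metric.isOpen_ball).preimage (S.continuous_map.iterate i))
    have hxV : x ∈ V := by
      rw [hVdef]
      simp only [Set.mem_iInter, Set.mem_preimage, Metric.mem_ball]
      intro i _
      simpa using hδpos
    obtain ⟨N, hN⟩ := synd_retTimes hM hVopen ⟨x, hxV⟩ x
    refine ⟨N, fun a => ?_⟩
    obtain ⟨t, ht1, ht2, ht3⟩ := hN a
    refine ⟨t, ht1, ht2, fun i hi => ?_⟩
    have hmem : S.map^[t] x ∈ V := ht3.2
    rw [hVdef] at hmem
    simp only [Set.mem_iInter, Set.mem_preimage, Metric.mem_ball] at hmem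
    have hclose : dist (S.map^[i] (S.map^[t] x)) (S.map^[i] x) < δ :=
      hmem i (Finset.mem_range.mpr hi)
    rw [← Function.iterate_add_apply] at hclose
    have hd : |dist (S.map^[i+t] x) u - dist (S.map^[i] x) u| < δ := by
      have := abs_dist_sub_le (S.map^[i+t] x) (S.map^[i] x) u
      exact lt_of_le_of_lt this hclose
    have hsep := hδle i hi
    show decide (dist (S.map^[t+i] x) u < r) = decide (dist (S.map^[i] x) u < r)
    rw [show t + i = i + t by omega]
    rcases lt_or_gt_of_ne (hr i) with hlt | hgt
    · have : dist (S.map^[i+t] x) u < r := by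
        rw [abs_sub_lt_iff] at hd
        rw [abs_of_neg (by linarith)] at hsep
        linarith [hd.1, hd.2]
      simp [this, hlt]
    · have : ¬ dist (S.map^[i+t] x) u < r := by
        rw [abs_sub_lt_iff] at hd
        rw [abs_of_pos (by linarith)] at hsep
        push_neg
        linarith [hd.1, hd.2]
      simp [this, not_lt.mp this, hgt, not_lt_of_gt hgt]

def PosSupp (y : ℕ → Bool) : Set ℕ := {n | 0 < n ∧ y n = true}

lemma isOpen_cyl0 (y : ℕ → Bool) :
    IsOpen {w : (subSys y).carrier | w.1 0 = true} := by
  have h0 : IsOpen {z : ℕ → Bool | z 0 = true} := by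
    have : {z : ℕ → Bool | z 0 = true} = (fun z : ℕ → Bool => z 0) ⁻¹' {x | x = true} := rfl
    rw [this]
    exact (continuous_apply 0).isOpen_preimage _ (isOpen_discrete _)
  exact h0.preimage continuous_subtype_val

lemma retTimes_subSys (y : ℕ → Bool) (z : (subSys y).carrier) :
    RetTimes (subSys y) z {w : (subSys y).carrier | w.1 0 = true}
      = {n | 0 < n ∧ z.1 n = true} := by
  ext n
  simp only [RetTimes, Set.mem_setOf_eq]
  constructor
  · rintro ⟨hn, hmem⟩
    refine ⟨hn, ?_⟩
    have : (((subSys y).map^[n] z)).1 0 = true := hmem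
    rw [subSys_map_iterate, shift_iterate] at this
    simpa using this
  · rintro ⟨hn, hval⟩
    refine ⟨hn, ?_⟩
    show (((subSys y).map^[n] z)).1 0 = true
    rw [subSys_map_iterate, shift_iterate]
    simpa using hval

lemma exists_witness_seq {S : MetricDynSystem} (hM : S.Minimal) (x u : S.carrier)
    {U : Set S.carrier} (hU : IsOpen U) (huU : u ∈ U) :
    ∃ y : ℕ → Bool, UnifRec y ∧ (∃ m, y m = true) ∧
      (∀ n, y n = true → S.map^[n] x ∈ U) ∧ (x = u → y 0 = true) := by
  obtain ⟨ε, hε, hball⟩ := Metric.isOpen_iff.mp hU u huU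
  obtain ⟨r, hr0, hrε, hrgood⟩ := exists_good_radius (fun n => dist (S.map^[n] x) u) hε
  refine ⟨itin S x u r, itin_unifRec hM x u hrgood, ?_, ?_, ?_⟩
  · obtain ⟨N, hN⟩ := synd_retTimes hM Metric.isOpen_ball
      ⟨u, Metric.mem_ball_self hr0⟩ x
    obtain ⟨t, _, _, _, htV⟩ := hN 0
    exact ⟨t, by simpa [itin] using htV⟩
  · intro n hn
    have : dist (S.map^[n] x) u < r := by simpa [itin] using hn
    exact hball (Metric.mem_ball.mpr (lt_trans this hrε))
  · intro hxu
    subst hxu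
    simp only [itin, Function.iterate_zero_apply, dist_self]
    simpa using hr0

/-- Combinatorial characterization of dynamically central syndetic sets. -/
lemma dcs_iff (A : Set ℕ) :
    DynCentralSyndetic A ↔ ∃ y, UnifRec y ∧ y 0 = true ∧ PosSupp y ⊆ A := by
  constructor
  · rintro ⟨S, hM, x, U, hU, hxU, hRet⟩
    obtain ⟨y, hUR, _, hval, h0⟩ := exists_witness_seq hM x x hU hxU
    refine ⟨y, hUR, h0 rfl, ?_⟩
    rintro n ⟨hn, hv⟩
    exact hRet ⟨hn, hval n hv⟩
  · rintro ⟨y, hUR, h0, hsupp⟩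
    refine ⟨subSys y, subSys_minimal hUR, ⟨y, self_mem_lang y⟩,
      {w : (subSys y).carrier | w.1 0 = true}, isOpen_cyl0 y, h0, ?_⟩
    exact Set.Subset.trans (retTimes_subSys y _).subset hsupp

/-- Combinatorial characterization of dynamically syndetic sets. -/
lemma ds_iff (A : Set ℕ) :
    DynSyndetic A ↔ ∃ y, UnifRec y ∧ (∃ m, y m = true) ∧ PosSupp y ⊆ A := by
  constructor
  · rintro ⟨S, hM, x, U, hU, hUne, hRet⟩
    obtain ⟨u, hu⟩ := hUne
    obtain ⟨y, hUR, hm, hval, _⟩ := exists_witness_seq hM x u hU hu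
    refine ⟨y, hUR, hm, ?_⟩
    rintro n ⟨hn, hv⟩
    exact hRet ⟨hn, hval n hv⟩
  · rintro ⟨y, hUR, ⟨m, hm⟩, hsupp⟩
    refine ⟨subSys y, subSys_minimal hUR, ⟨y, self_mem_lang y⟩,
      {w : (subSys y).carrier | w.1 0 = true}, isOpen_cyl0 y,
      ⟨⟨shift^[m] y, shift_iterate_mem_lang (self_mem_lang y) m⟩, ?_⟩, ?_⟩
    · show (shift^[m] y) 0 = true
      rw [shift_iterate]
      simpa using hm
    · exact Set.Subset.trans (retTimes_subSys y _).subset hsupp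

/-- Combinatorial characterization of pointwise recurrence. -/
lemma pr_iff (A : Set ℕ) :
    PointwiseRecurrent A ↔
      ∀ y : ℕ → Bool, UnifRec y → y 0 = true → ∃ n ∈ A, 0 < n ∧ y n = true := by
  constructor
  · intro h y hUR h0
    obtain ⟨n, hnA, hn, hmem⟩ := h (subSys y) (subSys_minimal hUR) ⟨y, self_mem_lang y⟩
      {w : (subSys y).carrier | w.1 0 = true} (isOpen_cyl0 y) h0
    refine ⟨n, hnA, hn, ?_⟩
    have hm2 : (((subSys y).map^[n] ⟨y, self_mem_lang y⟩ : (subSys y).carrier)).1 0 = true := hmem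
    have hm3 : (shift^[n] y) 0 = true :=
      (congrFun (subSys_map_iterate y n ⟨y, self_mem_lang y⟩) 0).symm.trans hm2
    rw [shift_iterate] at hm3
    simpa using hm3
  · intro h S hM x U hU hxU
    obtain ⟨y, hUR, _, hval, h0⟩ := exists_witness_seq hM x x hU hxU
    obtain ⟨n, hnA, hn, hv⟩ := h y hUR (h0 rfl)
    exact ⟨n, hnA, hn, hval n hv⟩

/-- Combinatorial characterization of dynamical thickness. -/
lemma dt_iff (A : Set ℕ) :
    DynThick A ↔
      ∀ y : ℕ → Bool, UnifRec y → (∃ m, y m = true) → ∃ n ∈ A, 0 < n ∧ y n = true := by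
  constructor
  · intro h y hUR ⟨m, hm⟩
    obtain ⟨n, hnA, hn, hmem⟩ := h (subSys y) (subSys_minimal hUR) ⟨y, self_mem_lang y⟩
      {w : (subSys y).carrier | w.1 0 = true} (isOpen_cyl0 y)
      ⟨⟨shift^[m] y, shift_iterate_mem_lang (self_mem_lang y) m⟩, by
        show (shift^[m] y) 0 = true
        rw [shift_iterate]
        simpa using hm⟩
    refine ⟨n, hnA, hn, ?_⟩
    have hm2 : (((subSys y).map^[n] ⟨y, self_mem_lang y⟩ : (subSys y).carrier)).1 0 = true := hmem
    have hm3 : (shift^[n] y) 0 = true :=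
      (congrFun (subSys_map_iterate y n ⟨y, self_mem_lang y⟩) 0).symm.trans hm2
    rw [shift_iterate] at hm3
    simpa using hm3
  · intro h S hM x U hU hUne
    obtain ⟨u, hu⟩ := hUne
    obtain ⟨y, hUR, hm, hval, _⟩ := exists_witness_seq hM x u hU hu
    obtain ⟨n, hnA, hn, hv⟩ := h y hUR hm
    exact ⟨n, hnA, hn, hval n hv⟩

/-! ### Combinatorial lemmas on piecewise syndetic sets -/

def DShift (D : Set ℕ) (L : ℕ) : Set ℕ := {t | ∃ i < L, t + i ∈ D}

lemma thick_mono {S T : Set ℕ} (h : S ⊆ T) (hS : Thick S) : Thick T := by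
  intro F
  obtain ⟨n, hn, hF⟩ := hS F
  exact ⟨n, hn, fun f hf => h (hF f hf)⟩

lemma pws_shift {D : Set ℕ} (hD : ¬ PiecewiseSyndetic D) (L : ℕ) (hL : 0 < L) :
    ¬ PiecewiseSyndetic (DShift D L) := by
  rintro ⟨N, hN0, hthick⟩
  apply hD
  refine ⟨N + L - 1, by omega, ?_⟩
  refine thick_mono ?_ hthick
  rintro m hm
  simp only [Set.mem_iUnion] at hm ⊢
  obtain ⟨i, hi, hm0, hmD⟩ := hm
  obtain ⟨j, hj, hmem⟩ := hmD
  rw [Finset.mem_Icc] at hi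
  refine ⟨i + j, ?_, hm0, ?_⟩
  · rw [Finset.mem_Icc]; omega
  · rw [show m + (i + j) = m + i + j by omega]; exact hmem

lemma synd_diff {S D : Set ℕ} (hS : Synd S) (hD : ¬ PiecewiseSyndetic D) :
    Synd (S \ D) := by
  obtain ⟨N, hN⟩ := hS
  rcases Nat.eq_zero_or_pos N with rfl | hNpos
  · obtain ⟨t, h1, h2, _⟩ := hN 0; omega
  by_contra hcon
  apply hD
  refine ⟨N, hNpos, ?_⟩
  intro F
  rw [Synd] at hcon
  push_neg at hcon
  obtain ⟨a, ha⟩ := hcon (F.sup id + N + 1)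
  refine ⟨a + 1, by omega, fun f hf => ?_⟩
  obtain ⟨t, h1, h2, h3⟩ := hN (a + f + 1)
  have hfs : f ≤ F.sup id := Finset.le_sup (f := id) hf
  have htD : t ∈ D := by
    by_contra htD
    exact absurd ⟨h3, htD⟩ (ha t (by omega) (by omega))
  have hiI : t - (f + (a + 1)) ∈ Finset.Icc 1 N := by rw [Finset.mem_Icc]; omega
  refine Set.mem_biUnion hiI ?_
  exact ⟨by omega, by rw [show f + (a+1) + (t - (f + (a+1))) = t by omega]; exact htD⟩

lemma posSupp_synd {y : ℕ → Bool} (hy : UnifRec y) {m : ℕ} (hm : y m = true) :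
    Synd {t | y t = true} := by
  obtain ⟨N, hN⟩ := hy (m + 1)
  refine ⟨N + m, fun a => ?_⟩
  obtain ⟨t, h1, h2, h3⟩ := hN a
  exact ⟨t + m, by omega, by omega, by rw [Set.mem_setOf_eq, h3 m (by omega)]; exact hm⟩

/-! ### The block construction -/

section Construction

variable (y : ℕ → Bool) (D : Set ℕ) (M : ℕ → ℕ) (m₀ : ℕ)

/-- positions where a length-`L` window matches the prefix of `y` and avoids `D`. -/
def Tset (L : ℕ) : Set ℕ := OccSet y L \ DShift D L

open Classical in
/-- raw choice of an element of `Tset L` in the window `(a, a + M L]`. -/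
noncomputable def pickTraw (L a : ℕ) : ℕ :=
  if h : ∃ t, a < t ∧ t ≤ a + M L ∧ t ∈ Tset y D L then h.choose else a + 1

/-- Choice of an element of `Tset L` in the window `(a, a + M L]`, clamped for termination. -/
noncomputable def pickT (L a : ℕ) : ℕ :=
  max (a + 1) (min (pickTraw y D M L a) (a + M L))

lemma pickT_gt (L a : ℕ) : a < pickT y D M L a :=
  lt_of_lt_of_le (Nat.lt_succ_self a) (le_max_left _ _)

lemma pickT_le (L a : ℕ) : pickT y D M L a ≤ a + max 1 (M L) := by
  rw [pickT]
  rcases max_cases (a+1) (min (pickTraw y D M L a) (a + M L)) with ⟨h1, _⟩ | ⟨h1, _⟩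
  · rw [h1]; omega
  · rw [h1]
    have := min_le_right (pickTraw y D M L a) (a + M L)
    omega

lemma pickT_spec (L a : ℕ) (h : ∃ t, a < t ∧ t ≤ a + M L ∧ t ∈ Tset y D L) :
    a < pickT y D M L a ∧ pickT y D M L a ≤ a + M L ∧ pickT y D M L a ∈ Tset y D L := by
  have hc := h.choose_spec
  have hraw : pickTraw y D M L a = h.choose := dif_pos h
  rw [pickT, hraw, min_eq_left hc.2.1, max_eq_right (by omega)]
  exact hc

/-- The filling procedure: fills `[b, e)` with copies of prefixes (given by their
scale index and length function `F`), placed at `Tset` points, using scales `≤ k`. -/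
noncomputable def fill (F : ℕ → ℕ) : ℕ → ℕ → ℕ → List (ℕ × ℕ)
  | 0, b, e =>
    if hbe : b + M (F 0) + F 0 ≤ e ∧ b < e then
      (pickT y D M (F 0) b, 0) :: fill F 0 (pickT y D M (F 0) b + F 0) e
    else []
  | (k+1), b, e =>
    if hbe : b + M (F (k+1)) + F (k+1) ≤ e ∧ b < e then
      fill F k b (pickT y D M (F (k+1)) b) ++
        (pickT y D M (F (k+1)) b, k+1) ::
          fill F (k+1) (pickT y D M (F (k+1)) b + F (k+1)) e
    else fill F k b e
  termination_by k b e => (e - b, k)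
  decreasing_by
  · apply Prod.Lex.left
    have h1 := pickT_gt y D M (F 0) b
    omega
  · have h1 := pickT_gt y D M (F (k+1)) b
    have h2 := pickT_le y D M (F (k+1)) b
    have h3 : pickT y D M (F (k+1)) b ≤ e := by
      rcases Nat.eq_zero_or_pos (M (F (k+1))) with h0 | h0
      · rw [h0] at h2; simp at h2; omega
      · rw [max_eq_right h0] at h2; omega
    have h : pickT y D M (F (k+1)) b - b ≤ e - b := by omega
    rcases lt_or_eq_of_le h with h4 | h4
    · exact Prod.Lex.left _ _ h4
    · exact h4 ▸ Prod.Lex.right _ (Nat.lt_succ_self k)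
  · apply Prod.Lex.left
    have h1 := pickT_gt y D M (F (k+1)) b
    omega
  · exact Prod.Lex.right _ (Nat.lt_succ_self k)

/-- Write a list of placements (pieces) on top of a prefix of length `L` of `W`. -/
def wr (F : ℕ → ℕ) (W : ℕ → Bool) (L : ℕ) (ps : List (ℕ × ℕ)) : ℕ → Bool :=
  fun n =>
    if n < L then W n else
      match ps.find? (fun p => decide (p.1 ≤ n) && decide (n < p.1 + F p.2)) with
      | some p => W (n - p.1)
      | none => false

/-- The staged construction. `(st m).1` is the record of lengths of all stages so far,
`(st m).2` the `m`-th word. -/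
noncomputable def st : ℕ → (ℕ → ℕ) × (ℕ → Bool)
  | 0 => (fun _ => m₀ + 1, fun n => decide (n = m₀))
  | (m+1) =>
    let F := (st m).1
    let W := (st m).2
    let L := F m
    let t := pickT y D M L (2 * M L + 8 * L)
    let ps := fill y D M F m L t ++ [(t, m)]
    (fun k => if k ≤ m then F k else t + L, wr F W L ps)

/-- Length of the `m`-th stage. -/
noncomputable def Lfun (m : ℕ) : ℕ := (st y D M m₀ m).1 m

/-- The limiting sequence. -/
noncomputable def yy (n : ℕ) : Bool := (st y D M m₀ (n + 1)).2 n

end Construction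

section ConsLemmas

variable (y : ℕ → Bool) (D : Set ℕ) (M : ℕ → ℕ) (m₀ : ℕ)

/-- Length record at stage m. -/
noncomputable def Ffun (m : ℕ) : ℕ → ℕ := (st y D M m₀ m).1
/-- Word at stage m. -/
noncomputable def Wfun (m : ℕ) : ℕ → Bool := (st y D M m₀ m).2
/-- Big-copy position at stage m (used in passing from stage m to stage m+1). -/
noncomputable def tb (m : ℕ) : ℕ :=
  pickT y D M (Ffun y D M m₀ m m) (2 * M (Ffun y D M m₀ m m) + 8 * Ffun y D M m₀ m m)
/-- The pieces written at stage m+1. -/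
noncomputable def psm (m : ℕ) : List (ℕ × ℕ) :=
  fill y D M (Ffun y D M m₀ m) m (Ffun y D M m₀ m m) (tb y D M m₀ m) ++ [(tb y D M m₀ m, m)]

lemma st_succ_fst (m : ℕ) :
    Ffun y D M m₀ (m+1) = fun k =>
      if k ≤ m then Ffun y D M m₀ m k else tb y D M m₀ m + Ffun y D M m₀ m m := rfl

lemma st_succ_snd (m : ℕ) :
    Wfun y D M m₀ (m+1) =
      wr (Ffun y D M m₀ m) (Wfun y D M m₀ m) (Ffun y D M m₀ m m) (psm y D M m₀ m) := rfl

lemma Lfun_eq_Ffun (m : ℕ) : Lfun y D M m₀ m = Ffun y D M m₀ m m := rfl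

lemma Lfun_succ (m : ℕ) :
    Lfun y D M m₀ (m+1) = tb y D M m₀ m + Lfun y D M m₀ m := by
  show (st y D M m₀ (m+1)).1 (m+1) = _
  rw [show (st y D M m₀ (m+1)).1 = Ffun y D M m₀ (m+1) from rfl, st_succ_fst]
  simp only [if_neg (by omega : ¬ (m+1 ≤ m))]
  rfl

lemma Ffun_eq (m k : ℕ) (hk : k ≤ m) : Ffun y D M m₀ m k = Lfun y D M m₀ k := by
  induction m with
  | zero =>
    interval_cases k
    rfl
  | succ m ih =>
    rcases Nat.lt_or_ge k (m+1) with h | h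
    · rw [st_succ_fst]
      simp only [if_pos (by omega : k ≤ m)]
      exact ih (by omega)
    · have : k = m + 1 := by omega
      subst this
      rfl

lemma Lfun_zero : Lfun y D M m₀ 0 = m₀ + 1 := rfl

lemma Lfun_pos (m : ℕ) : 0 < Lfun y D M m₀ m := by
  induction m with
  | zero => rw [Lfun_zero]; omega
  | succ m ih => rw [Lfun_succ]; omega

lemma tb_gt (m : ℕ) :
    2 * M (Lfun y D M m₀ m) + 8 * Lfun y D M m₀ m < tb y D M m₀ m :=
  pickT_gt y D M _ _

lemma Lfun_lt_succ (m : ℕ) : Lfun y D M m₀ m < Lfun y D M m₀ (m+1) := by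
  rw [Lfun_succ]
  have := tb_gt y D M m₀ m
  omega

lemma Lfun_mono {j k : ℕ} (h : j ≤ k) : Lfun y D M m₀ j ≤ Lfun y D M m₀ k := by
  induction k with
  | zero =>
    have : j = 0 := by omega
    subst this
    exact le_refl _
  | succ k ih =>
    rcases Nat.lt_or_ge j (k+1) with h2 | h2
    · exact le_trans (ih (by omega)) (le_of_lt (Lfun_lt_succ y D M m₀ k))
    · have : j = k + 1 := by omega
      subst this
      rfl

lemma Lfun_ge (m : ℕ) : m + m₀ + 1 ≤ Lfun y D M m₀ m := by
  induction m with
  | zero => rw [Lfun_zero]; omega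
  | succ m ih =>
    have := Lfun_lt_succ y D M m₀ m
    omega

end ConsLemmas

section FillLemmas

variable (y : ℕ → Bool) (D : Set ℕ) (M : ℕ → ℕ)

lemma fill_zero_pos (F : ℕ → ℕ) (b e : ℕ) (h : b + M (F 0) + F 0 ≤ e ∧ b < e) :
    fill y D M F 0 b e
      = (pickT y D M (F 0) b, 0) :: fill y D M F 0 (pickT y D M (F 0) b + F 0) e := by
  rw [fill, dif_pos h]

lemma fill_zero_neg (F : ℕ → ℕ) (b e : ℕ) (h : ¬(b + M (F 0) + F 0 ≤ e ∧ b < e)) :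
    fill y D M F 0 b e = [] := by
  rw [fill, dif_neg h]

lemma fill_succ_pos (F : ℕ → ℕ) (k b e : ℕ) (h : b + M (F (k+1)) + F (k+1) ≤ e ∧ b < e) :
    fill y D M F (k+1) b e
      = fill y D M F k b (pickT y D M (F (k+1)) b) ++
          (pickT y D M (F (k+1)) b, (k+1)) ::
            fill y D M F (k+1) (pickT y D M (F (k+1)) b + F (k+1)) e := by
  rw [fill, dif_pos h]

lemma fill_succ_neg (F : ℕ → ℕ) (k b e : ℕ) (h : ¬(b + M (F (k+1)) + F (k+1) ≤ e ∧ b < e)) :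
    fill y D M F (k+1) b e = fill y D M F k b e := by
  rw [fill, dif_neg h]

lemma fill_struct (F : ℕ → ℕ)
    (hM' : ∀ j a, ∃ t, a < t ∧ t ≤ a + M (F j) ∧ t ∈ Tset y D (F j)) :
    ∀ k b e, (∀ p ∈ fill y D M F k b e,
        b < p.1 ∧ p.1 + F p.2 ≤ e ∧ p.2 ≤ k ∧ p.1 ∈ Tset y D (F p.2)) ∧
      (fill y D M F k b e).Pairwise (fun p q => p.1 + F p.2 ≤ q.1) := by
  intro k b e
  induction k, b, e using fill.induct y D M F with
  | case1 b e hbe ih =>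
    obtain ⟨hsp1, hsp2, hsp3⟩ := pickT_spec y D M (F 0) b (hM' 0 b)
    rw [fill_zero_pos y D M F b e hbe]
    constructor
    · intro p hp
      rw [List.mem_cons] at hp
      rcases hp with rfl | hp
      · exact ⟨hsp1, by show pickT y D M (F 0) b + F 0 ≤ e; omega, le_refl _, hsp3⟩
      · obtain ⟨h1, h2, h3, h4⟩ := ih.1 p hp
        exact ⟨by omega, h2, h3, h4⟩
    · rw [List.pairwise_cons]
      refine ⟨fun q hq => ?_, ih.2⟩
      have := (ih.1 q hq).1
      show pickT y D M (F 0) b + F 0 ≤ q.1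
      omega
  | case2 b e hbe =>
    rw [fill_zero_neg y D M F b e hbe]
    exact ⟨fun p hp => (List.not_mem_nil hp).elim, List.Pairwise.nil⟩
  | case3 k b e hbe ih1 ih2 =>
    obtain ⟨hsp1, hsp2, hsp3⟩ := pickT_spec y D M (F (k+1)) b (hM' (k+1) b)
    rw [fill_succ_pos y D M F k b e hbe]
    have hmemlead := ih1.1
    have hmemrest := ih2.1
    constructor
    · intro p hp
      rw [List.mem_append, List.mem_cons] at hp
      rcases hp with hp | rfl | hp
      · obtain ⟨h1, h2, h3, h4⟩ := hmemlead p hp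
        exact ⟨h1, by omega, by omega, h4⟩
      · exact ⟨hsp1, by show pickT y D M (F (k+1)) b + F (k+1) ≤ e; omega, le_refl _, hsp3⟩
      · obtain ⟨h1, h2, h3, h4⟩ := hmemrest p hp
        exact ⟨by omega, h2, h3, h4⟩
    · rw [List.pairwise_append]
      refine ⟨ih1.2, ?_, ?_⟩
      · rw [List.pairwise_cons]
        refine ⟨fun q hq => ?_, ih2.2⟩
        have := (hmemrest q hq).1
        show pickT y D M (F (k+1)) b + F (k+1) ≤ q.1
        omega
      · intro p hp q hq
        have hple := (hmemlead p hp).2.1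
        rw [List.mem_cons] at hq
        rcases hq with rfl | hq
        · show p.1 + F p.2 ≤ pickT y D M (F (k+1)) b
          omega
        · have := (hmemrest q hq).1; omega
  | case4 k b e hbe ih =>
    rw [fill_succ_neg y D M F k b e hbe]
    exact ⟨fun p hp => by
      obtain ⟨h1, h2, h3, h4⟩ := ih.1 p hp
      exact ⟨h1, h2, by omega, h4⟩, ih.2⟩

/-- The first piece of scale `≥ j` occurs within `M (F j) + F j` of the left edge. -/
lemma fill_first (F : ℕ → ℕ) (hF : ∀ j, 0 < F j)
    (hM' : ∀ j a, ∃ t, a < t ∧ t ≤ a + M (F j) ∧ t ∈ Tset y D (F j)) :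
    ∀ k b e j, j ≤ k → b + M (F j) + F j ≤ e →
      ∃ p ∈ fill y D M F k b e, j ≤ p.2 ∧ b < p.1 ∧ p.1 ≤ b + M (F j) + F j := by
  intro k b e
  induction k, b, e using fill.induct y D M F with
  | case1 b e hbe ih =>
    intro j hj he
    obtain ⟨hsp1, hsp2, hsp3⟩ := pickT_spec y D M (F 0) b (hM' 0 b)
    interval_cases j
    rw [fill_zero_pos y D M F b e hbe]
    exact ⟨(pickT y D M (F 0) b, 0), List.mem_cons_self, le_refl _, hsp1,
      by show pickT y D M (F 0) b ≤ b + M (F 0) + F 0; omega⟩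
  | case2 b e hbe =>
    intro j hj he
    interval_cases j
    exact absurd ⟨he, by have := hF 0; omega⟩ hbe
  | case3 k b e hbe ih1 ih2 =>
    intro j hj he
    obtain ⟨hsp1, hsp2, hsp3⟩ := pickT_spec y D M (F (k+1)) b (hM' (k+1) b)
    rw [fill_succ_pos y D M F k b e hbe]
    rcases le_or_gt (pickT y D M (F (k+1)) b) (b + M (F j) + F j) with hle | hlt
    · refine ⟨(pickT y D M (F (k+1)) b, k+1), ?_, by show j ≤ k+1; omega, hsp1, hle⟩
      rw [List.mem_append, List.mem_cons]
      right; left; rfl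
    · have hjk : j ≤ k := by
        rcases Nat.lt_or_ge j (k+1) with h | h
        · omega
        · exfalso
          have : j = k + 1 := by omega
          subst this
          omega
      obtain ⟨p, hp, h1, h2, h3⟩ := ih1 j hjk (by omega)
      exact ⟨p, by rw [List.mem_append]; left; exact hp, h1, h2, h3⟩
  | case4 k b e hbe ih =>
    intro j hj he
    rw [fill_succ_neg y D M F k b e hbe]
    have hjk : j ≤ k := by
      rcases Nat.lt_or_ge j (k+1) with h | h
      · omega
      · exfalso
        have : j = k + 1 := by omega
        subst this
        have := hF (k+1)
        exact hbe ⟨he, by omega⟩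
    exact ih j hjk he

end FillLemmas

section WrLemmas

lemma wr_lt {F : ℕ → ℕ} {W : ℕ → Bool} {L : ℕ} {ps : List (ℕ × ℕ)} {n : ℕ} (h : n < L) :
    wr F W L ps n = W n := by
  simp only [wr, if_pos h]

lemma find?_cover {F : ℕ → ℕ} {ps : List (ℕ × ℕ)}
    (hps : ps.Pairwise (fun p q => p.1 + F p.2 ≤ q.1)) {p : ℕ × ℕ} (hp : p ∈ ps) {n : ℕ}
    (h1 : p.1 ≤ n) (h2 : n < p.1 + F p.2) :
    ps.find? (fun q => decide (q.1 ≤ n) && decide (n < q.1 + F q.2)) = some p := by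
  induction ps with
  | nil => cases hp
  | cons a l ih =>
    rw [List.pairwise_cons] at hps
    rw [List.mem_cons] at hp
    rcases hp with rfl | hp
    · rw [List.find?_cons_of_pos]
      simp [h1, h2]
    · have ha : a.1 + F a.2 ≤ p.1 := hps.1 p hp
      rw [List.find?_cons_of_neg]
      · exact ih hps.2 hp
      · simp only [Bool.and_eq_true, decide_eq_true_eq, not_and]
        intro _
        omega

lemma wr_piece {F : ℕ → ℕ} {W : ℕ → Bool} {L : ℕ} {ps : List (ℕ × ℕ)}
    (hps : ps.Pairwise (fun p q => p.1 + F p.2 ≤ q.1)) {p : ℕ × ℕ} (hp : p ∈ ps) {n : ℕ}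
    (hL : ¬ n < L) (h1 : p.1 ≤ n) (h2 : n < p.1 + F p.2) :
    wr F W L ps n = W (n - p.1) := by
  simp only [wr, if_neg hL, find?_cover hps hp h1 h2]

end WrLemmas

section StageLemmas

variable (y : ℕ → Bool) (D : Set ℕ) (M : ℕ → ℕ) (m₀ : ℕ)

lemma Ffun_pos (m j : ℕ) : 0 < Ffun y D M m₀ m j := by
  induction m with
  | zero => show 0 < m₀ + 1; omega
  | succ m ih =>
    rw [st_succ_fst]
    dsimp only
    split
    · exact ih
    · have h2 := Lfun_pos y D M m₀ m
      rw [Lfun_eq_Ffun] at h2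
      omega

variable (hM : ∀ L, 0 < L → ∀ a, ∃ t, a < t ∧ t ≤ a + M L ∧ t ∈ Tset y D L)

include hM in
lemma hM_F (m : ℕ) : ∀ j a, ∃ t, a < t ∧ t ≤ a + M (Ffun y D M m₀ m j) ∧
    t ∈ Tset y D (Ffun y D M m₀ m j) :=
  fun j a => hM _ (Ffun_pos y D M m₀ m j) a

include hM in
lemma tb_spec (m : ℕ) :
    2 * M (Lfun y D M m₀ m) + 8 * Lfun y D M m₀ m < tb y D M m₀ m ∧
    tb y D M m₀ m ≤ 3 * M (Lfun y D M m₀ m) + 8 * Lfun y D M m₀ m ∧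
    tb y D M m₀ m ∈ Tset y D (Lfun y D M m₀ m) := by
  have h := pickT_spec y D M (Lfun y D M m₀ m) (2 * M (Lfun y D M m₀ m) + 8 * Lfun y D M m₀ m)
    (hM _ (Lfun_pos y D M m₀ m) _)
  have htb : tb y D M m₀ m
      = pickT y D M (Lfun y D M m₀ m) (2 * M (Lfun y D M m₀ m) + 8 * Lfun y D M m₀ m) := rfl
  rw [← htb] at h
  refine ⟨h.1, ?_, h.2.2⟩
  have h2 := h.2.1
  omega

include hM in
lemma psm_struct (m : ℕ) :
    (∀ p ∈ psm y D M m₀ m, Lfun y D M m₀ m < p.1 ∧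
      p.1 + Ffun y D M m₀ m p.2 ≤ Lfun y D M m₀ (m+1) ∧ p.2 ≤ m ∧
      p.1 ∈ Tset y D (Ffun y D M m₀ m p.2)) ∧
    (psm y D M m₀ m).Pairwise (fun p q => p.1 + Ffun y D M m₀ m p.2 ≤ q.1) := by
  have hfs := fill_struct y D M (Ffun y D M m₀ m) (hM_F y D M m₀ hM m) m
    (Ffun y D M m₀ m m) (tb y D M m₀ m)
  have htb := tb_spec y D M m₀ hM m
  have hLsucc := Lfun_succ y D M m₀ m
  have hLpos := Lfun_pos y D M m₀ m
  constructor
  · intro p hp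
    rw [psm, List.mem_append] at hp
    rcases hp with hp | hp
    · obtain ⟨h1, h2, h3, h4⟩ := hfs.1 p hp
      refine ⟨by rw [Lfun_eq_Ffun]; omega, ?_, h3, h4⟩
      have : tb y D M m₀ m ≤ Lfun y D M m₀ (m+1) := by omega
      omega
    · rw [List.mem_singleton] at hp
      subst hp
      refine ⟨by rw [Lfun_eq_Ffun] at *; omega, ?_, le_refl _, ?_⟩
      · show tb y D M m₀ m + Ffun y D M m₀ m m ≤ Lfun y D M m₀ (m+1)
        rw [← Lfun_eq_Ffun]
        omega
      · show tb y D M m₀ m ∈ Tset y D (Ffun y D M m₀ m m)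
        rw [← Lfun_eq_Ffun]
        exact htb.2.2
  · rw [psm, List.pairwise_append]
    refine ⟨hfs.2, List.pairwise_singleton _ _, ?_⟩
    intro p hp q hq
    rw [List.mem_singleton] at hq
    subst hq
    have := (hfs.1 p hp).2.1
    show p.1 + Ffun y D M m₀ m p.2 ≤ tb y D M m₀ m
    rw [Lfun_eq_Ffun] at *
    omega

include hM in
lemma Wfun_lt (m n : ℕ) (h : Wfun y D M m₀ m n = true) : n < Lfun y D M m₀ m := by
  induction m generalizing n with
  | zero =>
    have : decide (n = m₀) = true := h
    rw [decide_eq_true_eq] at this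
    subst this
    rw [Lfun_zero]
    omega
  | succ m ih =>
    rw [st_succ_snd] at h
    by_cases hn : n < Ffun y D M m₀ m m
    · have := Lfun_lt_succ y D M m₀ m
      rw [Lfun_eq_Ffun] at this
      omega
    · rw [wr] at h
      simp only [if_neg hn] at h
      rcases heq : (psm y D M m₀ m).find?
          (fun q => decide (q.1 ≤ n) && decide (n < q.1 + Ffun y D M m₀ m q.2)) with _ | p
      · rw [heq] at h; cases h
      · have hpred := List.find?_some heq
        have hmem := List.mem_of_find?_eq_some heq
        simp only [Bool.and_eq_true, decide_eq_true_eq] at hpred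
        have := (psm_struct y D M m₀ hM m).1 p hmem
        omega

lemma Wfun_succ_lt (m n : ℕ) (h : n < Lfun y D M m₀ m) :
    Wfun y D M m₀ (m+1) n = Wfun y D M m₀ m n := by
  rw [st_succ_snd]
  exact wr_lt (by rw [← Lfun_eq_Ffun]; exact h)

lemma Wfun_agree (m m' n : ℕ) (h : n < Lfun y D M m₀ m) (hmm : m ≤ m') :
    Wfun y D M m₀ m' n = Wfun y D M m₀ m n := by
  induction m' with
  | zero =>
    have : m = 0 := by omega
    subst this
    rfl
  | succ m' ih =>
    rcases Nat.lt_or_ge m (m'+1) with h2 | h2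
    · rw [Wfun_succ_lt y D M m₀ m' n (lt_of_lt_of_le h (Lfun_mono y D M m₀ (by omega)))]
      exact ih (by omega)
    · have : m = m' + 1 := by omega
      subst this
      rfl

lemma yy_eq (m n : ℕ) (h : n < Lfun y D M m₀ m) :
    yy y D M m₀ n = Wfun y D M m₀ m n := by
  have hn1 : n < Lfun y D M m₀ (n+1) := by
    have := Lfun_ge y D M m₀ (n+1)
    omega
  show Wfun y D M m₀ (n+1) n = Wfun y D M m₀ m n
  rcases Nat.le_or_le m (n+1) with hc | hc
  · rw [Wfun_agree y D M m₀ m (n+1) n h hc]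
  · rw [Wfun_agree y D M m₀ (n+1) m n hn1 hc]

include hM in
lemma piece_occ (m : ℕ) {p : ℕ × ℕ} (hp : p ∈ psm y D M m₀ m) :
    ∀ i < Ffun y D M m₀ m p.2,
      Wfun y D M m₀ (m+1) (p.1 + i) = Wfun y D M m₀ m i := by
  intro i hi
  have hstruct := psm_struct y D M m₀ hM m
  obtain ⟨h1, h2, h3, h4⟩ := hstruct.1 p hp
  rw [st_succ_snd]
  rw [wr_piece hstruct.2 hp (by rw [← Lfun_eq_Ffun]; omega) (by omega) (by omega)]
  congr 1
  omega

include hM in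
lemma piece_occ_yy (m : ℕ) {p : ℕ × ℕ} (hp : p ∈ psm y D M m₀ m) :
    ∀ i < Lfun y D M m₀ p.2, yy y D M m₀ (p.1 + i) = yy y D M m₀ i := by
  intro i hi
  obtain ⟨h1, h2, h3, h4⟩ := (psm_struct y D M m₀ hM m).1 p hp
  have hFi : i < Ffun y D M m₀ m p.2 := by rw [Ffun_eq y D M m₀ m p.2 h3]; exact hi
  have hi2 : i < Lfun y D M m₀ m := lt_of_lt_of_le hi (Lfun_mono y D M m₀ h3)
  rw [yy_eq y D M m₀ (m+1) (p.1 + i) (by omega),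
    piece_occ y D M m₀ hM m hp i hFi,
    yy_eq y D M m₀ m i hi2]

lemma big_mem (m : ℕ) : (tb y D M m₀ m, m) ∈ psm y D M m₀ m := by
  rw [psm, List.mem_append, List.mem_singleton]
  right
  rfl

include hM in
lemma end_occ (m j : ℕ) (hj : j ≤ m) :
    ∀ i < Lfun y D M m₀ j,
      yy y D M m₀ (Lfun y D M m₀ m - Lfun y D M m₀ j + i) = yy y D M m₀ i := by
  induction m with
  | zero =>
    intro i hi
    have : j = 0 := by omega
    subst this
    rw [show Lfun y D M m₀ 0 - Lfun y D M m₀ 0 + i = i by omega]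
  | succ m ih =>
    intro i hi
    rcases Nat.lt_or_ge j (m+1) with h2 | h2
    · have hjm : j ≤ m := by omega
      have hLj : Lfun y D M m₀ j ≤ Lfun y D M m₀ m := Lfun_mono y D M m₀ hjm
      have hLsucc := Lfun_succ y D M m₀ m
      have hLjpos := Lfun_pos y D M m₀ j
      have hx : Lfun y D M m₀ m - Lfun y D M m₀ j + i < Lfun y D M m₀ m := by omega
      have heq : Lfun y D M m₀ (m+1) - Lfun y D M m₀ j + i
          = tb y D M m₀ m + (Lfun y D M m₀ m - Lfun y D M m₀ j + i) := by omega
      rw [heq, piece_occ_yy y D M m₀ hM m (big_mem y D M m₀ m) _ hx]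
      exact ih hjm i hi
    · have : j = m + 1 := by omega
      subst this
      rw [show Lfun y D M m₀ (m+1) - Lfun y D M m₀ (m+1) + i = i by omega]

include hM in
lemma supp_W (hy0 : y m₀ = true) :
    ∀ m n, Wfun y D M m₀ m n = true → n = m₀ ∨ (0 < n ∧ y n = true ∧ n ∉ D) := by
  intro m
  induction m with
  | zero =>
    intro n h
    have : decide (n = m₀) = true := h
    rw [decide_eq_true_eq] at this
    exact Or.inl this
  | succ m ih =>
    intro n h
    rw [st_succ_snd] at h
    by_cases hn : n < Ffun y D M m₀ m m
    · rw [wr_lt hn] at h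
      exact ih n h
    · rw [wr] at h
      simp only [if_neg hn] at h
      rcases heq : (psm y D M m₀ m).find?
          (fun q => decide (q.1 ≤ n) && decide (n < q.1 + Ffun y D M m₀ m q.2)) with _ | p
      · rw [heq] at h; cases h
      · rw [heq] at h
        have hpred := List.find?_some heq
        have hmem := List.mem_of_find?_eq_some heq
        simp only [Bool.and_eq_true, decide_eq_true_eq] at hpred
        obtain ⟨hb1, hb2, hb3, hb4⟩ := (psm_struct y D M m₀ hM m).1 p hmem
        obtain ⟨hocc, hnD⟩ := hb4
        rw [OccSet, Set.mem_setOf_eq] at hocc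
        set i := n - p.1 with hidef
        have hiF : i < Ffun y D M m₀ m p.2 := by omega
        have hyn : y n = y i := by
          rw [show n = p.1 + i by omega]
          exact hocc i hiF
        have hnotD : n ∉ D := by
          intro hcon
          apply hnD
          exact ⟨i, hiF, by rw [show p.1 + i = n by omega]; exact hcon⟩
        rcases ih i h with hcase | hcase
        · -- i = m₀
          right
          refine ⟨by omega, ?_, hnotD⟩
          rw [hyn, hcase]
          exact hy0
        · right
          exact ⟨by omega, by rw [hyn]; exact hcase.2.1, hnotD⟩

include hM in
lemma supp_yy (hy0 : y m₀ = true) (hD0 : 0 < m₀ → m₀ ∉ D) :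
    ∀ n, 0 < n → yy y D M m₀ n = true → y n = true ∧ n ∉ D := by
  intro n hn h
  have hh : Wfun y D M m₀ (n+1) n = true := h
  rcases supp_W y D M m₀ hM hy0 (n+1) n hh with hcase | hcase
  · subst hcase
    exact ⟨hy0, hD0 hn⟩
  · exact ⟨hcase.2.1, hcase.2.2⟩

lemma yy_m0 : yy y D M m₀ m₀ = true := by
  have : m₀ < Lfun y D M m₀ 0 := by rw [Lfun_zero]; omega
  rw [yy_eq y D M m₀ 0 m₀ this]
  show decide (m₀ = m₀) = true
  simp

end StageLemmas

section MasterLemmas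

variable (y : ℕ → Bool) (D : Set ℕ) (M : ℕ → ℕ) (m₀ : ℕ)

/-- Occurrence of the scale-`j` prefix of the limit word at position `q`. -/
def OccY (j q : ℕ) : Prop :=
  ∀ i < Lfun y D M m₀ j, yy y D M m₀ (q + i) = yy y D M m₀ i

/-- gap bound for scale-`j` occurrences. -/
noncomputable def Gfun (j : ℕ) : ℕ := M (Lfun y D M m₀ j) + 3 * Lfun y D M m₀ j

/-- The master syndetic-occurrence property at stage `k`. -/
def Master (k : ℕ) : Prop :=
  ∀ j < k, ∀ u, u + Gfun y D M m₀ j + Lfun y D M m₀ j ≤ Lfun y D M m₀ k →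
    ∃ p, u ≤ p ∧ p ≤ u + Gfun y D M m₀ j ∧ OccY y D M m₀ j p

lemma OccY_mono {j j' q : ℕ} (h : j ≤ j') (hq : OccY y D M m₀ j' q) : OccY y D M m₀ j q :=
  fun i hi => hq i (lt_of_lt_of_le hi (Lfun_mono y D M m₀ h))

variable (hM : ∀ L, 0 < L → ∀ a, ∃ t, a < t ∧ t ≤ a + M L ∧ t ∈ Tset y D L)

include hM in
lemma psm_occY (m : ℕ) {p : ℕ × ℕ} (hp : p ∈ psm y D M m₀ m) {j : ℕ} (hj : j ≤ p.2) :
    OccY y D M m₀ j p.1 :=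
  OccY_mono y D M m₀ hj (piece_occ_yy y D M m₀ hM m hp)

include hM in
lemma fill_sub (m : ℕ) (HM : ∀ k', k' ≤ m → Master y D M m₀ k') :
    ∀ k b e, ∀ j, j ≤ k → j ≤ m →
      (∀ p ∈ fill y D M (Ffun y D M m₀ m) k b e, p ∈ psm y D M m₀ m) →
      ∀ u, b ≤ u → u + M (Lfun y D M m₀ j) + 2 * Lfun y D M m₀ j ≤ e →
        ∃ q, u ≤ q ∧ q ≤ u + Gfun y D M m₀ j ∧ OccY y D M m₀ j q := by
  have hFL : ∀ i, i ≤ m → Ffun y D M m₀ m i = Lfun y D M m₀ i := fun i hi => Ffun_eq y D M m₀ m i hi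
  have hLpos : ∀ i, 0 < Lfun y D M m₀ i := Lfun_pos y D M m₀
  intro k b e
  induction k, b, e using fill.induct y D M (Ffun y D M m₀ m) with
  | case1 b e hbe ih =>
    intro j hj hjm hsub u hu hue
    interval_cases j
    set t := pickT y D M (Ffun y D M m₀ m 0) b with htdef
    obtain ⟨hsp1, hsp2, hsp3⟩ := pickT_spec y D M (Ffun y D M m₀ m 0) b (hM_F y D M m₀ hM m 0 b)
    rw [← htdef] at hsp1 hsp2 hsp3
    have hF0 : Ffun y D M m₀ m 0 = Lfun y D M m₀ 0 := hFL 0 (by omega)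
    rw [fill_zero_pos y D M (Ffun y D M m₀ m) b e hbe, ← htdef] at hsub
    have hheadmem : (t, 0) ∈ psm y D M m₀ m := hsub _ (List.mem_cons_self)
    have hsubrest : ∀ p ∈ fill y D M (Ffun y D M m₀ m) 0 (t + Ffun y D M m₀ m 0) e,
        p ∈ psm y D M m₀ m := fun p hp => hsub p (List.mem_cons_of_mem _ hp)
    rcases Nat.lt_or_ge u (t + Ffun y D M m₀ m 0) with hint | hpast
    · rcases le_or_gt u t with hut | htu
      · -- u ≤ t : the head piece is close
        refine ⟨t, hut, ?_, psm_occY y D M m₀ hM m hheadmem (le_refl _)⟩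
        rw [Gfun, ← hF0]
        omega
      · -- inside head piece : use FIRST on the rest
        obtain ⟨q, hq, hq1, hq2, hq3⟩ := fill_first y D M (Ffun y D M m₀ m)
          (fun i => Ffun_pos y D M m₀ m i) (hM_F y D M m₀ hM m) 0
          (t + Ffun y D M m₀ m 0) e 0 (le_refl _) (by rw [hF0] at *; omega)
        refine ⟨q.1, by omega, ?_, psm_occY y D M m₀ hM m (hsubrest q hq) (by omega)⟩
        rw [Gfun, ← hF0]
        omega
    · -- past the head piece: recurse
      exact ih 0 (le_refl _) (by omega) hsubrest u hpast hue
  | case2 b e hbe =>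
    intro j hj hjm hsub u hu hue
    interval_cases j
    exfalso
    apply hbe
    have hF0 : Ffun y D M m₀ m 0 = Lfun y D M m₀ 0 := hFL 0 (by omega)
    have := hLpos 0
    rw [hF0]
    constructor <;> omega
  | case3 k b e hbe ih1 ih2 =>
    intro j hj hjm hsub u hu hue
    set t := pickT y D M (Ffun y D M m₀ m (k+1)) b with htdef
    obtain ⟨hsp1, hsp2, hsp3⟩ :=
      pickT_spec y D M (Ffun y D M m₀ m (k+1)) b (hM_F y D M m₀ hM m (k+1) b)
    rw [← htdef] at hsp1 hsp2 hsp3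
    rw [fill_succ_pos y D M (Ffun y D M m₀ m) k b e hbe, ← htdef] at hsub
    have hmidmem : (t, k+1) ∈ psm y D M m₀ m := by
      apply hsub
      rw [List.mem_append, List.mem_cons]
      right; left; rfl
    have hk1m : k + 1 ≤ m := ((psm_struct y D M m₀ hM m).1 _ hmidmem).2.2.1
    have hFk1 : Ffun y D M m₀ m (k+1) = Lfun y D M m₀ (k+1) := hFL (k+1) hk1m
    have hsublead : ∀ p ∈ fill y D M (Ffun y D M m₀ m) k b t, p ∈ psm y D M m₀ m :=
      fun p hp => hsub p (by rw [List.mem_append]; left; exact hp)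
    have hsubrest : ∀ p ∈ fill y D M (Ffun y D M m₀ m) (k+1) (t + Ffun y D M m₀ m (k+1)) e,
        p ∈ psm y D M m₀ m :=
      fun p hp => hsub p (by rw [List.mem_append, List.mem_cons]; right; right; exact hp)
    rcases le_or_gt u t with hut | htu
    · -- u ≤ t
      rcases le_or_gt t (u + Gfun y D M m₀ j) with hclose | hfar
      · exact ⟨t, hut, hclose, psm_occY y D M m₀ hM m hmidmem (by omega)⟩
      · -- t far: go into the lead region
        have hjk : j ≤ k := by
          by_contra hcon
          have : j = k + 1 := by omega
          subst this
          rw [Gfun, ← hFk1] at hfar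
          omega
        exact ih1 j hjk hjm hsublead u hu (by rw [Gfun] at hfar; omega)
    · rcases le_or_gt (t + Ffun y D M m₀ m (k+1)) u with hpast | hint
      · -- past the middle piece
        exact ih2 j hj hjm hsubrest u hpast hue
      · -- inside the middle piece
        rcases Nat.lt_or_ge j (k+1) with hjlt | hjge
        · -- j < k+1
          by_cases hwin : (u - t) + Gfun y D M m₀ j + Lfun y D M m₀ j ≤ Lfun y D M m₀ (k+1)
          · -- master window inside the copy
            obtain ⟨p₀, hp1, hp2, hp3⟩ := HM (k+1) hk1m j hjlt (u - t) hwin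
            refine ⟨t + p₀, by omega, by omega, ?_⟩
            intro i hi
            rw [show t + p₀ + i = t + (p₀ + i) by omega]
            rw [piece_occ_yy y D M m₀ hM m hmidmem (p₀ + i) (by show p₀ + i < Lfun y D M m₀ (k+1); omega)]
            exact hp3 i hi
          · rcases le_or_gt (u - t) (Lfun y D M m₀ (k+1) - Lfun y D M m₀ j) with hnear | hend
            · -- use the end-occurrence of the copy
              have hLjk : Lfun y D M m₀ j ≤ Lfun y D M m₀ (k+1) := Lfun_mono y D M m₀ (by omega)
              refine ⟨t + (Lfun y D M m₀ (k+1) - Lfun y D M m₀ j), by omega, by omega, ?_⟩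
              intro i hi
              rw [show t + (Lfun y D M m₀ (k+1) - Lfun y D M m₀ j) + i
                  = t + ((Lfun y D M m₀ (k+1) - Lfun y D M m₀ j) + i) by omega]
              rw [piece_occ_yy y D M m₀ hM m hmidmem _
                (by show Lfun y D M m₀ (k+1) - Lfun y D M m₀ j + i < Lfun y D M m₀ (k+1); omega)]
              exact end_occ y D M m₀ hM (k+1) j (by omega) i hi
            · -- near the very end of the copy: use FIRST on the rest
              obtain ⟨q, hq, hq1, hq2, hq3⟩ := fill_first y D M (Ffun y D M m₀ m)
                (fun i => Ffun_pos y D M m₀ m i) (hM_F y D M m₀ hM m) (k+1)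
                (t + Ffun y D M m₀ m (k+1)) e j (by omega)
                (by rw [hFk1]; rw [hFL j (by omega)]; omega)
              refine ⟨q.1, by omega, ?_, psm_occY y D M m₀ hM m (hsubrest q hq) hq1⟩
              rw [hFL j (by omega)] at hq3
              rw [Gfun]
              omega
        · -- j = k+1 : inside a piece of its own scale; use FIRST on the rest
          have hjeq : j = k + 1 := by omega
          obtain ⟨q, hq, hq1, hq2, hq3⟩ := fill_first y D M (Ffun y D M m₀ m)
            (fun i => Ffun_pos y D M m₀ m i) (hM_F y D M m₀ hM m) (k+1)
            (t + Ffun y D M m₀ m (k+1)) e j (by omega)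
            (by rw [hFL j hjm]; subst hjeq; rw [hFk1] at *; omega)
          refine ⟨q.1, by omega, ?_, psm_occY y D M m₀ hM m (hsubrest q hq) hq1⟩
          rw [hFL j hjm] at hq3
          rw [Gfun]
          subst hjeq
          rw [hFk1] at *
          omega
  | case4 k b e hbe ih =>
    intro j hj hjm hsub u hu hue
    rw [fill_succ_neg y D M (Ffun y D M m₀ m) k b e hbe] at hsub
    have hjk : j ≤ k := by
      by_contra hcon
      have hjeq : j = k + 1 := by omega
      apply hbe
      rw [← hjeq, hFL j hjm]
      have := hLpos j
      constructor <;> omega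
    exact ih j hjk hjm hsub u hu hue

end MasterLemmas

section MasterTheorem

variable (y : ℕ → Bool) (D : Set ℕ) (M : ℕ → ℕ) (m₀ : ℕ)
variable (hM : ∀ L, 0 < L → ∀ a, ∃ t, a < t ∧ t ≤ a + M L ∧ t ∈ Tset y D L)

include hM in
lemma master : ∀ m, Master y D M m₀ m := by
  intro m
  induction m using Nat.strong_induction_on with
  | _ m HM =>
    match m with
    | 0 => exact fun j hj => by omega
    | (m+1) =>
      intro j hj u hwin
      have hjm : j ≤ m := by omega
      have hLsucc := Lfun_succ y D M m₀ m
      have hLpos := Lfun_pos y D M m₀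
      have hLjm : Lfun y D M m₀ j ≤ Lfun y D M m₀ m := Lfun_mono y D M m₀ hjm
      have hGpos : 0 < Gfun y D M m₀ j := by rw [Gfun]; have := hLpos j; omega
      have htb := tb_spec y D M m₀ hM m
      by_cases hA : u + Gfun y D M m₀ j + Lfun y D M m₀ j ≤ Lfun y D M m₀ m
      · have hjltm : j < m := by
          rcases Nat.lt_or_ge j m with h | h
          · exact h
          · exfalso
            have : j = m := by omega
            subst this
            omega
        exact HM m (by omega) j hjltm u hA
      · by_cases hB : tb y D M m₀ m ≤ u
        · have hu0win : (u - tb y D M m₀ m) + Gfun y D M m₀ j + Lfun y D M m₀ j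
              ≤ Lfun y D M m₀ m := by omega
          have hjltm : j < m := by
            rcases Nat.lt_or_ge j m with h | h
            · exact h
            · exfalso
              have : j = m := by omega
              subst this
              omega
          obtain ⟨p₀, hp1, hp2, hp3⟩ := HM m (by omega) j hjltm (u - tb y D M m₀ m) hu0win
          refine ⟨tb y D M m₀ m + p₀, by omega, by omega, ?_⟩
          intro i hi
          rw [show tb y D M m₀ m + p₀ + i = tb y D M m₀ m + (p₀ + i) by omega]
          rw [piece_occ_yy y D M m₀ hM m (big_mem y D M m₀ m) (p₀ + i)
            (by show p₀ + i < Lfun y D M m₀ m; omega)]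
          exact hp3 i hi
        · by_cases hC1 : tb y D M m₀ m ≤ u + Gfun y D M m₀ j
          · exact ⟨tb y D M m₀ m, by omega, hC1,
              psm_occY y D M m₀ hM m (big_mem y D M m₀ m) hjm⟩
          · by_cases hC2 : Lfun y D M m₀ m ≤ u
            · -- apply fill_sub on the filling region
              have hsub : ∀ p ∈ fill y D M (Ffun y D M m₀ m) m (Ffun y D M m₀ m m)
                  (tb y D M m₀ m), p ∈ psm y D M m₀ m := by
                intro p hp
                rw [psm, List.mem_append]
                left
                exact hp
              refine fill_sub y D M m₀ hM m (fun k' hk' => ?_) m (Ffun y D M m₀ m m)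
                (tb y D M m₀ m) j hjm hjm hsub u (by rw [← Lfun_eq_Ffun]; omega) ?_
              · rcases Nat.lt_or_ge k' (m+1) with h | h
                · exact HM k' (by omega)
                · omega
              · rw [Gfun] at hC1
                omega
            · by_cases hC3 : u + Lfun y D M m₀ j ≤ Lfun y D M m₀ m
              · refine ⟨Lfun y D M m₀ m - Lfun y D M m₀ j, by omega, by omega, ?_⟩
                exact end_occ y D M m₀ hM m j hjm
              · -- u is within Lfun j of the end of the stage-m prefix
                obtain ⟨q, hq, hq1, hq2, hq3⟩ := fill_first y D M (Ffun y D M m₀ m)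
                  (fun i => Ffun_pos y D M m₀ m i) (hM_F y D M m₀ hM m) m
                  (Ffun y D M m₀ m m) (tb y D M m₀ m) j hjm
                  (by rw [Ffun_eq y D M m₀ m j hjm, ← Lfun_eq_Ffun]; rw [Gfun] at hC1; omega)
                have hsubq : q ∈ psm y D M m₀ m := by
                  rw [psm, List.mem_append]; left; exact hq
                refine ⟨q.1, ?_, ?_, psm_occY y D M m₀ hM m hsubq hq1⟩
                · rw [← Lfun_eq_Ffun] at hq2; omega
                · rw [Ffun_eq y D M m₀ m j hjm, ← Lfun_eq_Ffun] at hq3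
                  rw [Gfun]
                  omega

include hM in
lemma yy_unifRec : UnifRec (yy y D M m₀) := by
  intro L
  refine ⟨Gfun y D M m₀ L + 1, fun a => ?_⟩
  set mm := a + 1 + Gfun y D M m₀ L + Lfun y D M m₀ L with hmm
  have hLge := Lfun_ge y D M m₀ mm
  have hLL := Lfun_ge y D M m₀ L
  have hjlt : L < mm := by
    have := Lfun_pos y D M m₀ L
    omega
  obtain ⟨p, hp1, hp2, hp3⟩ := master y D M m₀ hM mm L hjlt (a+1) (by omega)
  refine ⟨p, by omega, by omega, fun i hi => hp3 i (by omega)⟩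

end MasterTheorem

/-- The key combinatorial theorem: removal of a non-piecewise-syndetic set from a
uniformly recurrent set of times. -/
theorem K4 {y : ℕ → Bool} (hy : UnifRec y) {D : Set ℕ} (hD : ¬ PiecewiseSyndetic D)
    {m₀ : ℕ} (hy0 : y m₀ = true) (hD0 : 0 < m₀ → m₀ ∉ D) :
    ∃ y' : ℕ → Bool, UnifRec y' ∧ y' m₀ = true ∧
      ∀ n, 0 < n → y' n = true → y n = true ∧ n ∉ D := by
  have hsynd : ∀ L, 0 < L → Synd (Tset y D L) :=
    fun L hL => synd_diff (hy L) (pws_shift hD L hL)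
  classical
  set M : ℕ → ℕ := fun L => if h : 0 < L then (hsynd L h).choose else 1 with hMdef
  have hM : ∀ L, 0 < L → ∀ a, ∃ t, a < t ∧ t ≤ a + M L ∧ t ∈ Tset y D L := by
    intro L hL a
    have hspec := (hsynd L hL).choose_spec a
    obtain ⟨t, h1, h2, h3⟩ := hspec
    refine ⟨t, h1, ?_, h3⟩
    rw [hMdef]
    simp only [dif_pos hL]
    exact h2
  exact ⟨yy y D M m₀, yy_unifRec y D M m₀ hM, yy_m0 y D M m₀,
    supp_yy y D M m₀ hM hy0 hD0⟩

section Transfer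

variable {A B : Set ℕ}

lemma mem_of_not_sdiff (hA : ∀ n ∈ A \ B, n ∈ ((A \ B) ∪ (B \ A))) : True := trivial

lemma pr_transfer (A B : Set ℕ) (h : ¬ PiecewiseSyndetic ((A \ B) ∪ (B \ A))) :
    PointwiseRecurrent A → PointwiseRecurrent B := by
  intro hA
  rw [pr_iff] at hA ⊢
  intro y hUR h0
  obtain ⟨y', hUR', h0', hsupp'⟩ := K4 hUR h (m₀ := 0) h0 (by omega)
  obtain ⟨n, hnA, hn, hv⟩ := hA y' hUR' h0'
  obtain ⟨hyv, hnD⟩ := hsupp' n hn hv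
  refine ⟨n, ?_, hn, hyv⟩
  by_cases hB : n ∈ B
  · exact hB
  · exact absurd (Or.inl ⟨hnA, hB⟩) hnD

lemma exists_good_base {y : ℕ → Bool} (hUR : UnifRec y) {m : ℕ} (hm : y m = true)
    {D : Set ℕ} (hD : ¬ PiecewiseSyndetic D) :
    ∃ m₀, 0 < m₀ ∧ y m₀ = true ∧ m₀ ∉ D := by
  have h1 : Synd {t | y t = true} := posSupp_synd hUR hm
  have h2 : Synd ({t | y t = true} \ D) := synd_diff h1 hD
  obtain ⟨N, hN⟩ := h2
  obtain ⟨t, ht1, _, ht3, ht4⟩ := hN 0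
  exact ⟨t, ht1, ht3, ht4⟩

lemma dt_transfer (A B : Set ℕ) (h : ¬ PiecewiseSyndetic ((A \ B) ∪ (B \ A))) :
    DynThick A → DynThick B := by
  intro hA
  rw [dt_iff] at hA ⊢
  intro y hUR ⟨m, hm⟩
  obtain ⟨m₀, hm₀pos, hm₀v, hm₀D⟩ := exists_good_base hUR hm h
  obtain ⟨y', hUR', h0', hsupp'⟩ := K4 hUR h hm₀v (fun _ => hm₀D)
  obtain ⟨n, hnA, hn, hv⟩ := hA y' hUR' ⟨m₀, h0'⟩
  obtain ⟨hyv, hnD⟩ := hsupp' n hn hv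
  refine ⟨n, ?_, hn, hyv⟩
  by_cases hB : n ∈ B
  · exact hB
  · exact absurd (Or.inl ⟨hnA, hB⟩) hnD

lemma dcs_transfer (A B : Set ℕ) (h : ¬ PiecewiseSyndetic ((A \ B) ∪ (B \ A))) :
    DynCentralSyndetic A → DynCentralSyndetic B := by
  intro hA
  rw [dcs_iff] at hA ⊢
  obtain ⟨y, hUR, h0, hsupp⟩ := hA
  obtain ⟨y', hUR', h0', hsupp'⟩ := K4 hUR h (m₀ := 0) h0 (by omega)
  refine ⟨y', hUR', h0', ?_⟩
  rintro n ⟨hn, hv⟩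
  obtain ⟨hyv, hnD⟩ := hsupp' n hn hv
  have hnA : n ∈ A := hsupp ⟨hn, hyv⟩
  by_cases hB : n ∈ B
  · exact hB
  · exact absurd (Or.inl ⟨hnA, hB⟩) hnD

lemma ds_transfer (A B : Set ℕ) (h : ¬ PiecewiseSyndetic ((A \ B) ∪ (B \ A))) :
    DynSyndetic A → DynSyndetic B := by
  intro hA
  rw [ds_iff] at hA ⊢
  obtain ⟨y, hUR, ⟨m, hm⟩, hsupp⟩ := hA
  obtain ⟨m₀, hm₀pos, hm₀v, hm₀D⟩ := exists_good_base hUR hm h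
  obtain ⟨y', hUR', h0', hsupp'⟩ := K4 hUR h hm₀v (fun _ => hm₀D)
  refine ⟨y', hUR', ⟨m₀, h0'⟩, ?_⟩
  rintro n ⟨hn, hv⟩
  obtain ⟨hyv, hnD⟩ := hsupp' n hn hv
  have hnA : n ∈ A := hsupp ⟨hn, hyv⟩
  by_cases hB : n ∈ B
  · exact hB
  · exact absurd (Or.inl ⟨hnA, hB⟩) hnD

end Transfer

end DynStab

theorem stable_under_non_piecewiseSyndetic_changes (A B : Set ℕ)
    (h : ¬ PiecewiseSyndetic ((A \ B) ∪ (B \ A))) :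
    (PointwiseRecurrent A ↔ PointwiseRecurrent B) ∧
    (DynThick A ↔ DynThick B) ∧
    (DynSyndetic A ↔ DynSyndetic B) ∧
    (DynCentralSyndetic A ↔ DynCentralSyndetic B) := by
  have h' : ¬ PiecewiseSyndetic ((B \ A) ∪ (A \ B)) := by
    rwa [Set.union_comm]
  exact ⟨⟨DynStab.pr_transfer A B h, DynStab.pr_transfer B A h'⟩,
    ⟨DynStab.dt_transfer A B h, DynStab.dt_transfer B A h'⟩,
    ⟨DynStab.ds_transfer A B h, DynStab.ds_transfer B A h'⟩,
    ⟨DynStab.dcs_transfer A B h, DynStab.dcs_transfer B A h'⟩⟩
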